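/- Let Y be a rational vector space, f : ℝ → Y, s ≥ 1, and δ > 0. If Δ_h^s f(x) = 0 for all x ∈ ℝ and all h ∈ (0, δ), then Δ_{h_1} ⋯ Δ_{h_s} f(x) = 0 for all x, h_1, ..., h_s ∈ ℝ. -/

import Mathlib

/-- The difference operator `Δ_h f (x) = f (x + h) - f x`. -/
def dd {X Y : Type*} [Add X] [Sub Y] (h : X) (f : X → Y) : X → Y :=
  fun x => f (x + h) - f x

/-- Iterated difference `Δ_{h₁}(Δ_{h₂ ⋯ hₛ} f)` for a list of steps. -/
def ddIter {X Y : Type*} [Add X] [Sub Y] (hs : List X) (f : X → Y) : X → Y :=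
  hs.foldr dd f

open Finset

/-! ### The integer combinatorial identity `∑ (-1)^(j+m) C(m,j) j^p = [p = m] * m!` -/

private lemma alt_sum_pow : ∀ (m p : ℕ), p ≤ m →
    (∑ j ∈ Finset.range (m+1), (-1:ℤ)^(j+m) * (m.choose j) * (j:ℤ)^p)
      = if p = m then (m.factorial : ℤ) else 0 := by
  intro m
  induction m with
  | zero =>
    intro p hp
    have hp0 : p = 0 := Nat.le_zero.mp hp
    subst hp0
    simp
  | succ m IH =>
    intro p hp
    rcases Nat.eq_zero_or_pos p with rfl | hp1
    · have h1 : ∑ j ∈ Finset.range (m+1+1), (-1:ℤ)^(j+(m+1)) * ((m+1).choose j) * (j:ℤ)^0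
          = (-1:ℤ)^(m+1) * ∑ j ∈ Finset.range (m+1+1), (-1:ℤ)^j * ((m+1).choose j) := by
        rw [Finset.mul_sum]
        refine Finset.sum_congr rfl fun j _ => ?_
        rw [pow_zero, mul_one, pow_add]
        ring
      rw [h1, Int.alternating_sum_range_choose]
      simp
    · obtain ⟨q, rfl⟩ : ∃ q, p = q + 1 := ⟨p - 1, (Nat.succ_pred_eq_of_pos hp1).symm⟩
      have hq : q ≤ m := by omega
      have hsucc : ∀ i : ℕ, (((m+1).choose (i+1)) : ℤ) * ((i:ℤ)+1) = ((m:ℤ)+1) * (m.choose i) := by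
        intro i
        have h := Nat.add_one_mul_choose_eq m i
        have h' : ((m+1) * (m.choose i) : ℤ) = (((m+1).choose (i+1)) : ℤ) * ((i+1 : ℕ) : ℤ) := by
          exact_mod_cast congrArg (Nat.cast : ℕ → ℤ) h
        push_cast at h'
        linarith [h']
      have step1 : ∑ j ∈ Finset.range (m+1+1), (-1:ℤ)^(j+(m+1)) * ((m+1).choose j) * (j:ℤ)^(q+1)
          = ∑ i ∈ Finset.range (m+1), (-1:ℤ)^(i+1+(m+1)) * ((m+1).choose (i+1)) * ((i+1:ℕ):ℤ)^(q+1) := by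
        rw [Finset.sum_range_succ']
        simp
      have step2 : ∀ i : ℕ, (-1:ℤ)^(i+1+(m+1)) * ((m+1).choose (i+1)) * ((i+1:ℕ):ℤ)^(q+1)
          = ∑ r ∈ Finset.range (q+1),
              ((m:ℤ)+1) * (q.choose r) * ((-1:ℤ)^(i+m) * (m.choose i) * (i:ℤ)^r) := by
        intro i
        have hsign : (-1:ℤ)^(i+1+(m+1)) = (-1:ℤ)^(i+m) := by
          have : i+1+(m+1) = (i+m) + 2 := by ring
          rw [this, pow_add]
          norm_num
        have hcast : ((i+1:ℕ):ℤ) = (i:ℤ)+1 := by push_cast; ring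
        rw [hsign, hcast, pow_succ, ← mul_assoc]
        rw [show (-1:ℤ)^(i+m) * ((m+1).choose (i+1)) * ((i:ℤ)+1)^q * ((i:ℤ)+1)
              = ((-1:ℤ)^(i+m) * ((((m+1).choose (i+1)) : ℤ) * ((i:ℤ)+1))) * ((i:ℤ)+1)^q by ring]
        rw [hsucc i]
        rw [add_pow (i:ℤ) 1 q, Finset.mul_sum]
        refine Finset.sum_congr rfl fun r _ => ?_
        rw [one_pow]
        ring
      rw [step1]
      rw [Finset.sum_congr rfl (fun i _ => step2 i)]
      rw [Finset.sum_comm]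
      have step3 : ∀ r ∈ Finset.range (q+1),
          (∑ i ∈ Finset.range (m+1),
            ((m:ℤ)+1) * (q.choose r) * ((-1:ℤ)^(i+m) * (m.choose i) * (i:ℤ)^r))
          = if r = m then ((m:ℤ)+1) * (q.choose r) * (m.factorial : ℤ) else 0 := by
        intro r hr
        have hr' := Finset.mem_range.1 hr
        rw [← Finset.mul_sum, IH r (by omega)]
        by_cases hrm : r = m
        · rw [if_pos hrm, if_pos hrm]
        · rw [if_neg hrm, if_neg hrm, mul_zero]
      rw [Finset.sum_congr rfl step3, Finset.sum_ite_eq' (Finset.range (q+1)) m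
        (fun r => ((m:ℤ)+1) * (q.choose r) * (m.factorial : ℤ))]
      by_cases hqm : q = m
      · subst hqm
        rw [if_pos (by simp), if_pos rfl, Nat.choose_self, Nat.factorial_succ]
        push_cast
        ring
      · rw [if_neg (by simp; omega), if_neg (by omega)]

/-! ### Abstract commutative-algebra part -/

section Alg

variable {R : Type*} [CommRing R] [Algebra ℚ R]

private lemma pow_sub_one_factor (a : R) (j : ℕ) :
    a^j - 1 = (a - 1) * ((j:R) + (a - 1) * ∑ l ∈ Finset.range j, ∑ m ∈ Finset.range l, a^m) := by
  have h1 : ∀ t : ℕ, (a - 1) * ∑ m ∈ Finset.range t, a^m = a^t - 1 := fun t => by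
    rw [mul_comm, geom_sum_mul]
  have h2 : (a-1) * ∑ l ∈ Finset.range j, ∑ m ∈ Finset.range l, a^m
      = (∑ l ∈ Finset.range j, a^l) - (j:R) := by
    rw [Finset.mul_sum]
    simp only [h1]
    rw [Finset.sum_sub_distrib, Finset.sum_const, Finset.card_range, nsmul_eq_mul, mul_one]
  rw [h2, ← h1 j]
  ring

private lemma eprod (e : ℝ → R) (he : ∀ a b : ℝ, e (a+b) = e a * e b) (he0 : e 0 = 1)
    {ι : Type*} (s : Finset ι) (z : ι → ℝ) :
    ∏ i ∈ s, e (z i) = e (∑ i ∈ s, z i) := by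
  classical
  induction s using Finset.cons_induction with
  | empty => simpa using he0.symm
  | cons a s ha ih => rw [Finset.prod_cons, Finset.sum_cons, ih, ← he]

private lemma pow_mem_of_le (e : ℝ → R) (N : Ideal R) (n : ℕ)
    (hN : ∀ h : ℝ, (e h - 1)^n ∈ N) (h : ℝ) (m : ℕ) (hm : n ≤ m) :
    (e h - 1)^m ∈ N := by
  obtain ⟨k, rfl⟩ := Nat.exists_eq_add_of_le hm
  rw [pow_add]
  exact Ideal.mul_mem_right _ _ (hN h)

private lemma polar_step (e : ℝ → R) (he : ∀ a b : ℝ, e (a+b) = e a * e b) (he0 : e 0 = 1)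
    (N : Ideal R) (n : ℕ) (hN : ∀ h : ℝ, (e h - 1)^n ∈ N)
    (L : ℕ) (hL : n ≤ L) (z : Fin L → ℝ)
    (IH : ∀ i0 : Fin L, (∏ i, (e (z i) - 1)) * (e (z i0) - 1) ∈ N) :
    (∏ i, (e (z i) - 1)) ∈ N := by
  classical
  set P : R := ∏ i, (e (z i) - 1) with hP
  set w : Fin L → ℕ → R :=
    fun i j => ∑ l ∈ Finset.range j, ∑ m ∈ Finset.range l, (e (z i))^m with hw
  -- the big alternating sum over subsets
  set S : R := ∑ ε ∈ (univ : Finset (Finset (Fin L))),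
      (-1:R)^(L - ε.card) * (e (∑ i ∈ ε, z i) - 1)^L with hS
  have hSmem : S ∈ N := by
    refine Ideal.sum_mem _ fun ε _ => Ideal.mul_mem_left _ _ ?_
    exact pow_mem_of_le e N n hN _ L hL
  -- Step 1 : S = ∑_j c_j ∏_i (e(z i)^j - 1)
  have inner : ∀ j : ℕ, ∏ i, ((e (z i))^j - 1)
      = ∑ ε ∈ (univ : Finset (Finset (Fin L))), (-1:R)^(L - ε.card) * ∏ i ∈ ε, (e (z i))^j := by
    intro j
    have h1 : ∏ i, ((e (z i))^j - 1) = ∏ i, ((e (z i))^j + (-1)) := by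
      refine Finset.prod_congr rfl fun i _ => ?_
      ring
    rw [h1, Finset.prod_add, ← Finset.powerset_univ]
    refine Finset.sum_congr rfl fun t ht => ?_
    rw [Finset.prod_const, Finset.card_sdiff_of_subset (Finset.subset_univ t), Finset.card_univ,
      Fintype.card_fin]
    ring
  have step1 : S = ∑ j ∈ Finset.range (L+1),
      ((-1:R)^(j+L) * (L.choose j)) * ∏ i, ((e (z i))^j - 1) := by
    rw [hS]
    have h1 : ∀ ε : Finset (Fin L),
        (-1:R)^(L - ε.card) * (e (∑ i ∈ ε, z i) - 1)^L
        = ∑ j ∈ Finset.range (L+1),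
            ((-1:R)^(j+L) * (L.choose j)) * ((-1:R)^(L - ε.card) * ∏ i ∈ ε, (e (z i))^j) := by
      intro ε
      rw [← eprod e he he0 ε z, sub_pow, Finset.mul_sum]
      refine Finset.sum_congr rfl fun j _ => ?_
      rw [one_pow, ← Finset.prod_pow]
      ring
    rw [Finset.sum_congr rfl (fun ε _ => h1 ε), Finset.sum_comm]
    refine Finset.sum_congr rfl fun j _ => ?_
    rw [← Finset.mul_sum, inner j]
  -- Step 2 : factor each ∏_i (e(z i)^j - 1)
  have step2 : ∀ j : ℕ, ∏ i, ((e (z i))^j - 1)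
      = P * ∏ i, ((j:R) + (e (z i) - 1) * w i j) := by
    intro j
    rw [hP, ← Finset.prod_mul_distrib]
    exact Finset.prod_congr rfl fun i _ => pow_sub_one_factor (e (z i)) j
  -- Step 3 : expand the second product, splitting off the empty set
  have step3 : ∀ j : ℕ, ∏ i, ((j:R) + (e (z i) - 1) * w i j)
      = (j:R)^L + ∑ t ∈ ((univ : Finset (Fin L)).powerset).erase ∅,
          (∏ i ∈ t, ((e (z i) - 1) * w i j)) * (j:R)^(L - t.card) := by
    intro j
    have h1 : ∏ i, ((j:R) + (e (z i) - 1) * w i j)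
        = ∏ i, (((e (z i) - 1) * w i j) + (j:R)) := by
      refine Finset.prod_congr rfl fun i _ => ?_
      ring
    rw [h1, Finset.prod_add]
    have h2 : ∀ t ∈ (univ : Finset (Fin L)).powerset,
        (∏ i ∈ t, ((e (z i) - 1) * w i j)) * ∏ _i ∈ (univ : Finset (Fin L)) \ t, (j:R)
          = (∏ i ∈ t, ((e (z i) - 1) * w i j)) * (j:R)^(L - t.card) := by
      intro t ht
      rw [Finset.prod_const, Finset.card_sdiff_of_subset (Finset.subset_univ t), Finset.card_univ,
        Fintype.card_fin]
    rw [Finset.sum_congr rfl h2,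
      ← Finset.add_sum_erase _ _ (Finset.empty_mem_powerset (univ : Finset (Fin L)))]
    simp
  -- every remainder term is in N
  have hrem : ∀ j : ℕ, ∀ t ∈ ((univ : Finset (Fin L)).powerset).erase ∅,
      ((-1:R)^(j+L) * (L.choose j)) *
        (P * ((∏ i ∈ t, ((e (z i) - 1) * w i j)) * (j:R)^(L - t.card))) ∈ N := by
    intro j t ht
    have htne : t.Nonempty := by
      rcases Finset.nonempty_iff_ne_empty.2 (Finset.ne_of_mem_erase ht) with h
      exact h
    obtain ⟨i0, hi0⟩ := htne
    rw [← Finset.mul_prod_erase t _ hi0]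
    have hgoal : ((-1:R)^(j+L) * (L.choose j)) *
        (P * (((e (z i0) - 1) * w i0 j * ∏ i ∈ t.erase i0, ((e (z i) - 1) * w i j))
          * (j:R)^(L - t.card)))
        = (P * (e (z i0) - 1)) *
          ((-1:R)^(j+L) * (L.choose j) * w i0 j
            * (∏ i ∈ t.erase i0, ((e (z i) - 1) * w i j)) * (j:R)^(L - t.card)) := by
      ring
    rw [hgoal]
    exact Ideal.mul_mem_right _ _ (IH i0)
  -- assemble
  have keyid : S = (L.factorial : R) * P
      + ∑ j ∈ Finset.range (L+1), ∑ t ∈ ((univ : Finset (Fin L)).powerset).erase ∅,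
          ((-1:R)^(j+L) * (L.choose j)) *
            (P * ((∏ i ∈ t, ((e (z i) - 1) * w i j)) * (j:R)^(L - t.card))) := by
    rw [step1]
    have h1 : ∀ j ∈ Finset.range (L+1),
        ((-1:R)^(j+L) * (L.choose j)) * ∏ i, ((e (z i))^j - 1)
        = ((-1:R)^(j+L) * (L.choose j) * (j:R)^L) * P
          + ∑ t ∈ ((univ : Finset (Fin L)).powerset).erase ∅,
              ((-1:R)^(j+L) * (L.choose j)) *
                (P * ((∏ i ∈ t, ((e (z i) - 1) * w i j)) * (j:R)^(L - t.card))) := by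
      intro j _
      rw [step2 j, step3 j]
      have expand : P * ((j:R)^L + ∑ t ∈ ((univ : Finset (Fin L)).powerset).erase ∅,
            (∏ i ∈ t, ((e (z i) - 1) * w i j)) * (j:R)^(L - t.card))
          = P * (j:R)^L + ∑ t ∈ ((univ : Finset (Fin L)).powerset).erase ∅,
            P * ((∏ i ∈ t, ((e (z i) - 1) * w i j)) * (j:R)^(L - t.card)) := by
        rw [mul_add, Finset.mul_sum]
      rw [expand, mul_add, Finset.mul_sum]
      congr 1
      ring
    rw [Finset.sum_congr rfl h1, Finset.sum_add_distrib, ← Finset.sum_mul]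
    congr 1
    have hκ : (∑ j ∈ Finset.range (L+1), (-1:R)^(j+L) * (L.choose j) * (j:R)^L)
        = (L.factorial : R) := by
      have h := alt_sum_pow L L le_rfl
      rw [if_pos rfl] at h
      have h2 : ((∑ j ∈ Finset.range (L+1), (-1:ℤ)^(j+L) * (L.choose j) * (j:ℤ)^L : ℤ) : R)
          = ((L.factorial : ℤ) : R) := by rw [h]
      push_cast at h2
      exact h2
    rw [← hκ]
  have hfacP : (L.factorial : R) * P ∈ N := by
    have hRem : (∑ j ∈ Finset.range (L+1), ∑ t ∈ ((univ : Finset (Fin L)).powerset).erase ∅,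
        ((-1:R)^(j+L) * (L.choose j)) *
          (P * ((∏ i ∈ t, ((e (z i) - 1) * w i j)) * (j:R)^(L - t.card)))) ∈ N :=
      Ideal.sum_mem _ fun j _ => Ideal.sum_mem _ fun t ht => hrem j t ht
    have heq : (L.factorial : R) * P = S -
        (∑ j ∈ Finset.range (L+1), ∑ t ∈ ((univ : Finset (Fin L)).powerset).erase ∅,
          ((-1:R)^(j+L) * (L.choose j)) *
            (P * ((∏ i ∈ t, ((e (z i) - 1) * w i j)) * (j:R)^(L - t.card)))) := by
      rw [keyid]
      ring
    rw [heq]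
    exact Ideal.sub_mem _ hSmem hRem
  -- divide by L!
  have hfinal : P = algebraMap ℚ R ((L.factorial : ℚ)⁻¹) * ((L.factorial : R) * P) := by
    rw [← mul_assoc]
    have h1 : (L.factorial : R) = algebraMap ℚ R (L.factorial : ℚ) := by
      rw [map_natCast]
    rw [h1, ← map_mul, inv_mul_cancel₀ (Nat.cast_ne_zero.2 (Nat.factorial_ne_zero L)),
      map_one, one_mul]
  rw [hfinal]
  exact Ideal.mul_mem_left _ _ hfacP

private lemma mainlem (e : ℝ → R) (he : ∀ a b : ℝ, e (a+b) = e a * e b) (he0 : e 0 = 1)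
    (N : Ideal R) (n : ℕ) (hN : ∀ h : ℝ, (e h - 1)^n ∈ N) :
    ∀ (k L : ℕ) (z : Fin L → ℝ), n ≤ L →
    (n-1) * ((univ : Finset (Fin L)).image z).card + 1 ≤ L + k →
    (∏ i, (e (z i) - 1)) ∈ N := by
  intro k
  induction k with
  | zero =>
    intro L z hL hb
    classical
    have hmap : ∀ a ∈ (univ : Finset (Fin L)), z a ∈ (univ : Finset (Fin L)).image z :=
      fun a ha => Finset.mem_image_of_mem z ha
    have hlt : ((univ : Finset (Fin L)).image z).card * (n-1) < (univ : Finset (Fin L)).card := by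
      rw [Finset.card_univ, Fintype.card_fin, mul_comm]
      omega
    obtain ⟨y, _, hylt⟩ := Finset.exists_lt_card_fiber_of_mul_lt_card_of_maps_to hmap hlt
    have hycard : n ≤ (Finset.filter (fun i => z i = y) (univ : Finset (Fin L))).card := by
      omega
    rw [← Finset.prod_filter_mul_prod_filter_not (univ : Finset (Fin L)) (fun i => z i = y)]
    refine Ideal.mul_mem_right _ _ ?_
    have h1 : ∏ i ∈ Finset.filter (fun i => z i = y) (univ : Finset (Fin L)), (e (z i) - 1)
        = (e y - 1)^(Finset.filter (fun i => z i = y) (univ : Finset (Fin L))).card := by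
      rw [Finset.prod_congr rfl (fun i hi => by rw [(Finset.mem_filter.1 hi).2]),
        Finset.prod_const]
    rw [h1]
    exact pow_mem_of_le e N n hN y _ hycard
  | succ k IHk =>
    intro L z hL hb
    classical
    refine polar_step e he he0 N n hN L hL z ?_
    intro i0
    have hsnoc : (∏ i, (e (z i) - 1)) * (e (z i0) - 1)
        = ∏ i : Fin (L+1), (e ((Fin.snoc z (z i0) : Fin (L+1) → ℝ) i) - 1) := by
      rw [Fin.prod_univ_castSucc]
      congr 1
      · refine Finset.prod_congr rfl fun i _ => ?_
        rw [Fin.snoc_castSucc]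
      · rw [Fin.snoc_last]
    rw [hsnoc]
    have himg : (univ : Finset (Fin (L+1))).image (Fin.snoc z (z i0) : Fin (L+1) → ℝ)
        = (univ : Finset (Fin L)).image z := by
      apply Finset.Subset.antisymm
      · intro y hy
        obtain ⟨j, _, hj⟩ := Finset.mem_image.1 hy
        induction j using Fin.lastCases with
        | last =>
          rw [Fin.snoc_last] at hj
          exact Finset.mem_image.2 ⟨i0, Finset.mem_univ _, hj⟩
        | cast i =>
          rw [Fin.snoc_castSucc] at hj
          exact Finset.mem_image.2 ⟨i, Finset.mem_univ _, hj⟩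
      · intro y hy
        obtain ⟨i, _, hi⟩ := Finset.mem_image.1 hy
        refine Finset.mem_image.2 ⟨i.castSucc, Finset.mem_univ _, ?_⟩
        rw [Fin.snoc_castSucc]
        exact hi
    refine IHk (L+1) (Fin.snoc z (z i0)) (le_trans hL (Nat.le_succ L)) ?_
    rw [himg]
    omega

end Alg

/-! ### The analytic side: action of the group algebra on functions -/

section Act

variable {Y : Type*} [AddCommGroup Y] [Module ℚ Y]

private def shiftE (h : ℝ) : Module.End ℚ (ℝ → Y) where
  toFun f := fun x => f (x + h)
  map_add' f g := rfl
  map_smul' c f := rfl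

private def shiftHom : Multiplicative ℝ →* Module.End ℚ (ℝ → Y) where
  toFun h := shiftE (Multiplicative.toAdd h)
  map_one' := by
    ext f x
    show f (x + (0:ℝ)) = f x
    rw [add_zero]
  map_mul' a b := by
    ext f x
    show f (x + (Multiplicative.toAdd a + Multiplicative.toAdd b))
      = f (x + Multiplicative.toAdd a + Multiplicative.toAdd b)
    rw [add_assoc]

private noncomputable def Phi : AddMonoidAlgebra ℚ ℝ →ₐ[ℚ] Module.End ℚ (ℝ → Y) :=
  AddMonoidAlgebra.lift ℚ _ ℝ shiftHom

private lemma Phi_delta (h : ℝ) (g : ℝ → Y) :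
    Phi (AddMonoidAlgebra.single h (1:ℚ) - 1) g = dd h g := by
  rw [map_sub, map_one, LinearMap.sub_apply]
  show (Phi (AddMonoidAlgebra.single h (1:ℚ))) g - g = dd h g
  rw [Phi, AddMonoidAlgebra.lift_single, one_smul]
  rfl

private noncomputable def annI (f : ℝ → Y) : Ideal (AddMonoidAlgebra ℚ ℝ) where
  carrier := {a | Phi a f = 0}
  zero_mem' := by
    show Phi 0 f = 0
    rw [map_zero]
    rfl
  add_mem' := by
    intro a b ha hb
    show Phi (a + b) f = 0
    rw [map_add, LinearMap.add_apply, ha, hb, add_zero]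
  smul_mem' := by
    intro c a ha
    show Phi (c • a) f = 0
    rw [smul_eq_mul, map_mul, Module.End.mul_apply, ha, map_zero]

end Act

theorem stmt7 {Y : Type*} [AddCommGroup Y] [Module ℚ Y] (f : ℝ → Y)
    (s : ℕ) (hs : 1 ≤ s) (δ : ℝ) (hδ : 0 < δ)
    (H : ∀ x : ℝ, ∀ h ∈ Set.Ioo (0 : ℝ) δ, (dd h)^[s] f x = 0) :
    ∀ (x : ℝ) (h : Fin s → ℝ), ddIter (List.ofFn h) f x = 0 := by
  classical
  set e : ℝ → AddMonoidAlgebra ℚ ℝ := fun t => AddMonoidAlgebra.single t 1 with he_def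
  have he : ∀ a b : ℝ, e (a+b) = e a * e b := by
    intro a b
    rw [he_def]
    simp only
    rw [AddMonoidAlgebra.single_mul_single, one_mul]
  have he0 : e 0 = 1 := by
    rw [he_def]
    simp only
    rw [AddMonoidAlgebra.one_def]
  set N : Ideal (AddMonoidAlgebra ℚ ℝ) := annI f with hN_def
  -- translate the hypothesis
  have hIoo : ∀ t ∈ Set.Ioo (0:ℝ) δ, (e t - 1)^s ∈ N := by
    intro t ht
    show Phi ((e t - 1)^s) f = 0
    rw [map_pow, Module.End.pow_apply]
    have hdd : ⇑(Phi (Y := Y) (e t - 1)) = dd t := funext fun g => Phi_delta t g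
    rw [hdd]
    funext x'
    exact H x' t ht
  -- extend to all reals
  have hpos : ∀ t : ℝ, 0 < t → (e t - 1)^s ∈ N := by
    intro t ht
    obtain ⟨p, hp⟩ := exists_nat_gt (t / δ)
    have hp0 : (0:ℝ) < (p:ℝ) := lt_trans (div_pos ht hδ) hp
    have hpn : (p:ℝ) ≠ 0 := hp0.ne'
    have hmem : t / p ∈ Set.Ioo (0:ℝ) δ := by
      constructor
      · positivity
      · rw [div_lt_iff₀ hp0]
        calc t = (t/δ)*δ := by field_simp
        _ < (p:ℝ) * δ := by exact mul_lt_mul_of_pos_right hp hδ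
        _ = δ * p := by ring
    have key : e t = (e (t/p))^p := by
      rw [he_def]
      simp only
      rw [AddMonoidAlgebra.single_pow, one_pow]
      congr 1
      rw [nsmul_eq_mul]
      field_simp
    rw [key, ← geom_sum_mul, mul_pow]
    exact Ideal.mul_mem_left _ _ (hIoo _ hmem)
  have hall : ∀ t : ℝ, (e t - 1)^s ∈ N := by
    intro t
    rcases lt_trichotomy t 0 with h1 | h1 | h1
    · have hmul : e t * e (-t) = 1 := by
        rw [← he, add_neg_cancel, he0]
      have hrw : e t - 1 = (-(e t)) * (e (-t) - 1) := by
        linear_combination hmul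
      rw [hrw, mul_pow]
      exact Ideal.mul_mem_left _ _ (hpos (-t) (by linarith))
    · rw [h1, he0, sub_self, zero_pow (by omega : s ≠ 0)]
      exact N.zero_mem
    · exact hpos t h1
  -- main membership
  intro x h
  have hmem : (∏ i, (e (h i) - 1)) ∈ N := by
    refine mainlem e he he0 N s hall
      ((s-1) * ((univ : Finset (Fin s)).image h).card + 1) s h le_rfl ?_
    exact Nat.le_add_left _ s
  -- translate back
  have htrans : ∀ (l : List ℝ) (g : ℝ → Y),
      ddIter l g = Phi ((l.map (fun t => e t - 1)).prod) g := by
    intro l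
    induction l with
    | nil =>
      intro g
      show g = Phi 1 g
      rw [map_one]
      rfl
    | cons a l ih =>
      intro g
      show dd a (ddIter l g) = _
      rw [List.map_cons, List.prod_cons, map_mul, Module.End.mul_apply, ← ih g, ← Phi_delta a]
  have hprod : ((List.ofFn h).map (fun t => e t - 1)).prod = ∏ i, (e (h i) - 1) := by
    rw [List.map_ofFn, List.prod_ofFn]
    rfl
  have hz : Phi (∏ i, (e (h i) - 1)) f = 0 := hmem
  rw [htrans (List.ofFn h) f, hprod, hz]
  rfl
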